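/- For every natural number n ≥ 1, the sequential regex formula γn := (x1{Σ*} ∨ y1{Σ*})·(x2{Σ*} ∨ y2{Σ*})·⋯·(xn{Σ*} ∨ yn{Σ*}) (with 2n distinct variables x1,…,xn,y1,…,yn, where Σ* abbreviates (σ1∨⋯∨σs)* over all letters of Σ) has the property that every disjunctive functional regex formula β with ⟦β⟧(d) = ⟦γn⟧(d) for all documents d has at least 2^n disjuncts. -/

import Mathlib

namespace Spanners

open scoped Classical

/-! ### Spans and mappings -/

abbrev Span := ℕ × ℕ

abbrev VMapping := ℕ → Option Span

def emptyMapping : VMapping := fun _ => none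

def mapDom (μ : VMapping) : Set ℕ := {x | μ x ≠ none}

/-- Two mappings are compatible if they agree on every common variable. -/
def Compatible (μ1 μ2 : VMapping) : Prop :=
  ∀ x s1 s2, μ1 x = some s1 → μ2 x = some s2 → s1 = s2

def DisjointDom (μ1 μ2 : VMapping) : Prop :=
  ∀ x, μ1 x = none ∨ μ2 x = none

def munion (μ1 μ2 : VMapping) : VMapping := fun x =>
  match μ1 x with
  | some s => some s
  | none => μ2 x

def minsert (x : ℕ) (s : Span) (μ : VMapping) : VMapping :=
  fun y => if y = x then some s else μ y

/-- Natural join of two sets of mappings. -/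
def joinSet (S1 S2 : Set VMapping) : Set VMapping :=
  {μ | ∃ μ1 ∈ S1, ∃ μ2 ∈ S2, Compatible μ1 μ2 ∧ μ = munion μ1 μ2}

/-- Difference of two sets of mappings. -/
def diffSet (S1 S2 : Set VMapping) : Set VMapping :=
  {μ1 | μ1 ∈ S1 ∧ ∀ μ2 ∈ S2, ¬ Compatible μ1 μ2}

/-- Restriction of a mapping to a set of variables. -/
noncomputable def restrictMap (μ : VMapping) (V : Set ℕ) : VMapping :=
  fun x => if x ∈ V then μ x else none

/-- Projection of a set of mappings to a set of variables. -/
def projSet (V : Set ℕ) (S : Set VMapping) : Set VMapping :=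
  {μ' | ∃ μ ∈ S, μ' = restrictMap μ V}

/-! ### Regex formulas -/

inductive RGX (Sig : Type) where
  | empty : RGX Sig
  | eps : RGX Sig
  | letter : Sig → RGX Sig
  | union : RGX Sig → RGX Sig → RGX Sig
  | concat : RGX Sig → RGX Sig → RGX Sig
  | star : RGX Sig → RGX Sig
  | bind : ℕ → RGX Sig → RGX Sig

variable {Sig : Type}

def RGX.vars : RGX Sig → Finset ℕ
  | .empty => ∅
  | .eps => ∅
  | .letter _ => ∅
  | .union a b => a.vars ∪ b.vars
  | .concat a b => a.vars ∪ b.vars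
  | .star a => a.vars
  | .bind x a => insert x a.vars

def RGX.size : RGX Sig → ℕ
  | .empty => 1
  | .eps => 1
  | .letter _ => 1
  | .union a b => a.size + b.size + 1
  | .concat a b => a.size + b.size + 1
  | .star a => a.size + 1
  | .bind _ a => a.size + 1

/-- The schemaless semantics `⟨α⟩(d)`: `RMatch α d i j μ` means `([i,j⟩, μ) ∈ ⟨α⟩(d)`. -/
inductive RMatch : RGX Sig → List Sig → ℕ → ℕ → VMapping → Prop where
  | eps {d : List Sig} {i : ℕ} (h1 : 1 ≤ i) (h2 : i ≤ d.length + 1) :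
      RMatch .eps d i i emptyMapping
  | letter {d : List Sig} {i : ℕ} {σ : Sig} (h1 : 1 ≤ i) (h2 : d[i - 1]? = some σ) :
      RMatch (.letter σ) d i (i + 1) emptyMapping
  | unionL {a b : RGX Sig} {d : List Sig} {i j : ℕ} {μ : VMapping}
      (h : RMatch a d i j μ) : RMatch (.union a b) d i j μ
  | unionR {a b : RGX Sig} {d : List Sig} {i j : ℕ} {μ : VMapping}
      (h : RMatch b d i j μ) : RMatch (.union a b) d i j μ
  | concat {a b : RGX Sig} {d : List Sig} {i k j : ℕ} {μ1 μ2 : VMapping}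
      (h1 : RMatch a d i k μ1) (h2 : RMatch b d k j μ2) (hd : DisjointDom μ1 μ2) :
      RMatch (.concat a b) d i j (munion μ1 μ2)
  | bind {x : ℕ} {a : RGX Sig} {d : List Sig} {i j : ℕ} {μ : VMapping}
      (h : RMatch a d i j μ) (hx : μ x = none) :
      RMatch (.bind x a) d i j (minsert x (i, j) μ)
  | starNil {a : RGX Sig} {d : List Sig} {i : ℕ} (h1 : 1 ≤ i) (h2 : i ≤ d.length + 1) :
      RMatch (.star a) d i i emptyMapping
  | starCons {a : RGX Sig} {d : List Sig} {i k j : ℕ} {μ1 μ2 : VMapping}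
      (h1 : RMatch a d i k μ1) (h2 : RMatch (.star a) d k j μ2) (hd : DisjointDom μ1 μ2) :
      RMatch (.star a) d i j (munion μ1 μ2)

/-- `⟦α⟧(d)`: mappings extracted with the full span. -/
def rgxSem (α : RGX Sig) (d : List Sig) : Set VMapping :=
  {μ | RMatch α d 1 (d.length + 1) μ}

/-- Sequential regex formulas. -/
def RGX.Sequential : RGX Sig → Prop
  | .empty => True
  | .eps => True
  | .letter _ => True
  | .union a b => a.Sequential ∧ b.Sequential
  | .concat a b => a.Sequential ∧ b.Sequential ∧ Disjoint a.vars b.vars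
  | .star a => a.Sequential ∧ a.vars = ∅
  | .bind x a => a.Sequential ∧ x ∉ a.vars

/-- Variable-free words over the alphabet (built from ε, letters and concatenation). -/
inductive RGX.IsWord : RGX Sig → Prop where
  | eps : RGX.IsWord .eps
  | letter (σ : Sig) : RGX.IsWord (.letter σ)
  | concat {a b : RGX Sig} : a.IsWord → b.IsWord → RGX.IsWord (.concat a b)

/-- Functional for a set `V` of variables. -/
inductive FunctionalFor : RGX Sig → Finset ℕ → Prop where
  | word {α : RGX Sig} (h : α.IsWord) : FunctionalFor α ∅
  | union {a b : RGX Sig} {V : Finset ℕ} (ha : FunctionalFor a V) (hb : FunctionalFor b V) :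
      FunctionalFor (.union a b) V
  | concat {a b : RGX Sig} {V : Finset ℕ} (V1 : Finset ℕ) (hsub : V1 ⊆ V)
      (ha : FunctionalFor a V1) (hb : FunctionalFor b (V \ V1)) :
      FunctionalFor (.concat a b) V
  | star {a : RGX Sig} (h : FunctionalFor a ∅) : FunctionalFor (.star a) ∅
  | bind {x : ℕ} {a : RGX Sig} {V : Finset ℕ} (h : FunctionalFor a (V.erase x)) :
      FunctionalFor (.bind x a) V

def RGX.Functional (α : RGX Sig) : Prop := FunctionalFor α α.vars

/-- Disjunctive functional regex formulas: finite disjunctions of functional regex formulas. -/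
inductive DisjFunctional : RGX Sig → Prop where
  | base {γ : RGX Sig} (h : γ.Functional) : DisjFunctional γ
  | union {a b : RGX Sig} (ha : DisjFunctional a) (hb : DisjFunctional b) :
      DisjFunctional (.union a b)

/-- Number of disjuncts of a (disjunctive) regex formula. -/
def countDisjuncts : RGX Sig → ℕ
  | .union a b => countDisjuncts a + countDisjuncts b
  | _ => 1

/-- Disjunction-free regex formulas. -/
def RGX.DisjFree : RGX Sig → Prop
  | .union _ _ => False
  | .concat a b => a.DisjFree ∧ b.DisjFree
  | .star a => a.DisjFree
  | .bind _ a => a.DisjFree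
  | _ => True

/-- `γ` is synchronized for `x`: no subformula `γ1 ∨ γ2` contains `x`. -/
def RGX.SyncFor : RGX Sig → ℕ → Prop
  | .union a b, x => (x ∉ a.vars ∧ x ∉ b.vars) ∧ a.SyncFor x ∧ b.SyncFor x
  | .concat a b, x => a.SyncFor x ∧ b.SyncFor x
  | .star a, x => a.SyncFor x
  | .bind _ a, x => a.SyncFor x
  | _, _ => True

/-- Concatenation of a list of regex formulas. -/
def concatList : List (RGX Sig) → RGX Sig
  | [] => .eps
  | [α] => α
  | α :: rest => .concat α (concatList rest)

/-- Disjunction of a list of regex formulas. -/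
def disjList : List (RGX Sig) → RGX Sig
  | [] => .empty
  | [α] => α
  | α :: rest => .union α (disjList rest)

/-! ### vset-automata -/

inductive VLabel (Sig : Type) where
  | eps : VLabel Sig
  | letter : Sig → VLabel Sig
  | openv : ℕ → VLabel Sig
  | closev : ℕ → VLabel Sig
deriving DecidableEq

structure VA (Sig : Type) [DecidableEq Sig] where
  q0 : ℕ
  F : Finset ℕ
  δ : Finset (ℕ × VLabel Sig × ℕ)

variable [DecidableEq Sig]

/-- The states of a VA: the initial state and all states mentioned in `F` or in transitions. -/
def statesOf (A : VA Sig) : Finset ℕ :=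
  insert A.q0 (A.F ∪ A.δ.image (fun t => t.1) ∪ A.δ.image (fun t => t.2.2))

def labelVars : VLabel Sig → Finset ℕ
  | .openv x => {x}
  | .closev x => {x}
  | _ => ∅

/-- `Vars(A)`: the variables mentioned in the transitions of `A`. -/
def varsOf (A : VA Sig) : Finset ℕ := A.δ.biUnion (fun t => labelVars t.2.1)

/-- Total size of a VA: number of states plus number of transitions. -/
def vaSize (A : VA Sig) : ℕ := (statesOf A).card + A.δ.card

/-- `A.PathFrom p ls q`: a path (run segment) from `p` to `q` with label sequence `ls`. -/
inductive VA.PathFrom (A : VA Sig) : ℕ → List (VLabel Sig) → ℕ → Prop where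
  | nil (q : ℕ) : VA.PathFrom A q [] q
  | cons {p q r : ℕ} {l : VLabel Sig} {ls : List (VLabel Sig)}
      (h : (p, l, q) ∈ A.δ) (htail : VA.PathFrom A q ls r) : VA.PathFrom A p (l :: ls) r

/-- The word (document) read by a sequence of labels. -/
def readWord : List (VLabel Sig) → List Sig :=
  List.filterMap fun l => match l with
    | VLabel.letter σ => some σ
    | _ => none

def isLetterL : VLabel Sig → Bool
  | .letter _ => true
  | _ => false

/-- The current position in the document just before executing the `k`-th label. -/
def posAt (ls : List (VLabel Sig)) (k : ℕ) : ℕ := 1 + (ls.take k).countP isLetterL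

/-- Validity of a run, given by its label sequence. -/
def ValidLabels (ls : List (VLabel Sig)) : Prop :=
  ∀ x : ℕ,
    ls.count (VLabel.openv x) ≤ 1 ∧
    ls.count (VLabel.closev x) ≤ 1 ∧
    ((VLabel.openv x) ∈ ls ↔ (VLabel.closev x) ∈ ls) ∧
    ∀ i j : ℕ, ls[i]? = some (VLabel.openv x) → ls[j]? = some (VLabel.closev x) →
      posAt ls i ≤ posAt ls j

/-- The mapping `μ_ρ` extracted from a (valid accepting) run with label sequence `ls`. -/
def runMapping (ls : List (VLabel Sig)) : VMapping := fun x =>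
  if (VLabel.openv x) ∈ ls then
    some (posAt ls (ls.idxOf (VLabel.openv x)), posAt ls (ls.idxOf (VLabel.closev x)))
  else none

/-- `ls` is the label sequence of an accepting run of `A`. -/
def AcceptsWith (A : VA Sig) (ls : List (VLabel Sig)) : Prop :=
  ∃ qf, VA.PathFrom A A.q0 ls qf ∧ qf ∈ A.F

/-- `⟦A⟧(d)`. -/
def vaSem (A : VA Sig) (d : List Sig) : Set VMapping :=
  {μ | ∃ ls, AcceptsWith A ls ∧ readWord ls = d ∧ ValidLabels ls ∧ μ = runMapping ls}

/-- A VA is sequential if all of its accepting runs are valid. -/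
def VA.Sequential (A : VA Sig) : Prop := ∀ ls, AcceptsWith A ls → ValidLabels ls

/-- A run from the initial state to `q` that is a prefix of an accepting run. -/
def PrefixRun (A : VA Sig) (ls : List (VLabel Sig)) (q : ℕ) : Prop :=
  VA.PathFrom A A.q0 ls q ∧ ∃ ls' qf, VA.PathFrom A q ls' qf ∧ qf ∈ A.F

/-- `A` is semi-functional for the variable `x`: no state has extended configuration `d`. -/
def SemiFunctionalFor (A : VA Sig) (x : ℕ) : Prop :=
  ¬ ∃ q ls1 ls2, PrefixRun A ls1 q ∧ PrefixRun A ls2 q ∧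
      (VLabel.closev x) ∈ ls1 ∧ (VLabel.openv x) ∉ ls2

def SemiFunctionalForSet (A : VA Sig) (X : Finset ℕ) : Prop :=
  ∀ x ∈ X, SemiFunctionalFor A x

/-- Functional VA: sequential, and every accepting run opens and closes every variable. -/
def FunctionalVA (A : VA Sig) : Prop :=
  A.Sequential ∧ ∀ ls, AcceptsWith A ls → ∀ x ∈ varsOf A,
    (VLabel.openv x) ∈ ls ∧ (VLabel.closev x) ∈ ls

/-- `l` has a unique target state in `A`. -/
def UniqueTarget (A : VA Sig) (l : VLabel Sig) : Prop :=
  ∃ qt : ℕ, ∀ p q : ℕ, (p, l, q) ∈ A.δ → q = qt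

/-- `A` is synchronized for the variable `x`. -/
def SyncForVA (A : VA Sig) (x : ℕ) : Prop :=
  UniqueTarget A (VLabel.openv x) ∧ UniqueTarget A (VLabel.closev x) ∧
    ((∀ ls, AcceptsWith A ls → (VLabel.openv x) ∈ ls ∧ (VLabel.closev x) ∈ ls) ∨
     (∀ ls, AcceptsWith A ls → (VLabel.openv x) ∉ ls ∧ (VLabel.closev x) ∉ ls))

/-- `A` is the disjunctive functional VA with functional components `parts`. -/
def DisjFunctionalVAWith (A : VA Sig) (parts : List (VA Sig)) : Prop :=
  (∀ B ∈ parts, FunctionalVA B) ∧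
  (parts.Pairwise fun B C => Disjoint (statesOf B) (statesOf C)) ∧
  (∀ B ∈ parts, A.q0 ∉ statesOf B) ∧
  A.F = parts.foldr (fun B s => B.F ∪ s) (∅ : Finset ℕ) ∧
  A.δ = (parts.map (fun B => (A.q0, (VLabel.eps : VLabel Sig), B.q0))).toFinset
        ∪ parts.foldr (fun B s => B.δ ∪ s) (∅ : Finset (ℕ × VLabel Sig × ℕ))

def DisjFunctionalVA (A : VA Sig) : Prop := ∃ parts, DisjFunctionalVAWith A parts

/-! ### 3CNF formulas -/

/-- A 3CNF clause over `n` Boolean variables: a triple of literals; `(i, true)` is `xᵢ`,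
`(i, false)` is `¬xᵢ`. -/
def Clause3 (n : ℕ) : Type := (Fin n × Bool) × (Fin n × Bool) × (Fin n × Bool)

def litsOf {n : ℕ} (c : Clause3 n) : List (Fin n × Bool) := [c.1, c.2.1, c.2.2]

def clauseSat {n : ℕ} (τ : Fin n → Bool) (c : Clause3 n) : Prop :=
  ∃ l ∈ litsOf c, τ l.1 = l.2

def Sat3 {n m : ℕ} (φ : Fin m → Clause3 n) : Prop :=
  ∃ τ : Fin n → Bool, ∀ j, clauseSat τ (φ j)

end Spanners

namespace Spanners

variable {Sig : Type} [Fintype Sig] [DecidableEq Sig]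

/-- `σ1 ∨ ⋯ ∨ σs`, over all letters of the alphabet. -/
noncomputable def allLetters (Sig : Type) [Fintype Sig] [DecidableEq Sig] : RGX Sig :=
  disjList ((Finset.univ : Finset Sig).toList.map RGX.letter)

/-- `γn := (x1{Σ*} ∨ y1{Σ*})·⋯·(xn{Σ*} ∨ yn{Σ*})`, with `xᵢ, yᵢ` encoded as `2i, 2i+1`. -/
noncomputable def gammaN (Sig : Type) [Fintype Sig] [DecidableEq Sig] (n : ℕ) : RGX Sig :=
  concatList (List.ofFn fun i : Fin n =>
    RGX.union (.bind (2 * (i : ℕ)) (.star (allLetters Sig)))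
              (.bind (2 * (i : ℕ) + 1) (.star (allLetters Sig))))


/-! ### Auxiliary lemmas -/

lemma mapDom_empty : mapDom (emptyMapping) = (∅ : Set ℕ) := by
  ext x; simp [mapDom, emptyMapping]

lemma mapDom_munion (μ1 μ2 : VMapping) :
    mapDom (munion μ1 μ2) = mapDom μ1 ∪ mapDom μ2 := by
  ext x; cases h : μ1 x <;> simp [mapDom, munion, h]

lemma mapDom_minsert (x : ℕ) (s : Span) (μ : VMapping) :
    mapDom (minsert x s μ) = insert x (mapDom μ) := by
  ext y; by_cases h : y = x <;> simp [mapDom, minsert, h]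

lemma dom_sub_vars {α : RGX Sig} {d : List Sig} {i j : ℕ} {μ : VMapping}
    (h : RMatch α d i j μ) : mapDom μ ⊆ (↑α.vars : Set ℕ) := by
  induction h with
  | eps h1 h2 => simp [mapDom_empty]
  | letter h1 h2 => simp [mapDom_empty]
  | unionL h ih => rw [mapDom] at *; intro x hx; simp [RGX.vars]; exact Or.inl (by simpa using ih hx)
  | unionR h ih => rw [mapDom] at *; intro x hx; simp [RGX.vars]; exact Or.inr (by simpa using ih hx)
  | concat h1 h2 hd ih1 ih2 =>
      rw [mapDom_munion]; intro x hx
      simp only [RGX.vars, Finset.coe_union, Set.mem_union] at *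
      rcases hx with hx | hx
      · exact Or.inl (ih1 hx)
      · exact Or.inr (ih2 hx)
  | bind h hx ih =>
      rw [mapDom_minsert]; intro y hy
      simp only [RGX.vars, Finset.coe_insert, Set.mem_insert_iff] at *
      rcases hy with rfl | hy
      · exact Or.inl rfl
      · exact Or.inr (ih hy)
  | starNil h1 h2 => simp [mapDom_empty]
  | starCons h1 h2 hd ih1 ih2 =>
      rw [mapDom_munion]; intro x hx
      rcases hx with hx | hx
      · exact ih1 hx
      · exact ih2 hx

lemma func_sub_dom {α : RGX Sig} {V : Finset ℕ} (hf : FunctionalFor α V) :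
    ∀ {d : List Sig} {i j : ℕ} {μ : VMapping}, RMatch α d i j μ →
      (↑V : Set ℕ) ⊆ mapDom μ := by
  induction hf with
  | word h => intro d i j μ hm; simp
  | union ha hb iha ihb =>
      intro d i j μ hm
      cases hm with
      | unionL h => exact iha h
      | unionR h => exact ihb h
  | concat V1 hsub ha hb iha ihb =>
      intro d i j μ hm
      cases hm with
      | concat h1 h2 hd =>
        rw [mapDom_munion]
        intro x hx
        simp only [Finset.mem_coe] at hx
        by_cases hx1 : x ∈ V1
        · exact Or.inl (iha h1 (by simpa using hx1))
        · exact Or.inr (ihb h2 (by simp [hx, hx1]))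
  | star h ih => intro d i j μ hm; simp
  | bind h ih =>
      intro d i j μ hm
      cases hm with
      | bind h0 hx0 =>
        rw [mapDom_minsert]
        intro y hy
        simp only [Finset.mem_coe] at hy
        rename_i x a V _
        by_cases hyx : y = x
        · exact Or.inl hyx
        · exact Or.inr (ih h0 (by simp [Finset.mem_erase, hyx, hy]))

lemma one_le_countDisjuncts (β : RGX Sig) : 1 ≤ countDisjuncts β := by
  induction β with
  | union a b iha ihb => simp only [countDisjuncts]; omega
  | _ => simp [countDisjuncts]

lemma functional_dom {β : RGX Sig} (hf : β.Functional) {d : List Sig} {μ : VMapping}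
    (hμ : μ ∈ rgxSem β d) : mapDom μ = (↑β.vars : Set ℕ) :=
  Set.Subset.antisymm (dom_sub_vars hμ) (func_sub_dom hf hμ)

lemma disj_domains {β : RGX Sig} (h : DisjFunctional β) :
    ∃ D : Finset (Finset ℕ), D.card ≤ countDisjuncts β ∧
      ∀ (d : List Sig) (μ : VMapping), μ ∈ rgxSem β d → ∃ V ∈ D, mapDom μ = (↑V : Set ℕ) := by
  induction h with
  | base hγ =>
      rename_i γ
      exact ⟨{γ.vars}, by simpa using one_le_countDisjuncts γ,
        fun d μ hμ => ⟨γ.vars, by simp, functional_dom hγ hμ⟩⟩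
  | union ha hb iha ihb =>
      obtain ⟨Da, hca, hda⟩ := iha
      obtain ⟨Db, hcb, hdb⟩ := ihb
      refine ⟨Da ∪ Db, ?_, ?_⟩
      · calc (Da ∪ Db).card ≤ Da.card + Db.card := Finset.card_union_le _ _
          _ ≤ _ := by simp only [countDisjuncts]; omega
      · intro d μ hμ
        cases hμ with
        | unionL h =>
            obtain ⟨V, hV, hVd⟩ := hda d _ h
            exact ⟨V, Finset.mem_union_left _ hV, hVd⟩
        | unionR h =>
            obtain ⟨V, hV, hVd⟩ := hdb d _ h
            exact ⟨V, Finset.mem_union_right _ hV, hVd⟩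

/-- Indicator mapping for a list of variables. -/
noncomputable def ifMem (l : List ℕ) : VMapping := fun v => if v ∈ l then some (1, 1) else none

lemma ifMem_cons (a : ℕ) (l : List ℕ) (v : ℕ) :
    ifMem (a :: l) v = if v = a then some (1, 1) else ifMem l v := by
  simp only [ifMem]
  by_cases hv : v = a
  · rw [if_pos (by simp [hv]), if_pos hv]
  · rw [if_neg hv]
    by_cases hl : v ∈ l
    · rw [if_pos (by simp [hl]), if_pos hl]
    · rw [if_neg (by simp [hv, hl]), if_neg hl]

lemma mapDom_ifMem (l : List ℕ) : mapDom (ifMem l) = (↑l.toFinset : Set ℕ) := by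
  ext x; by_cases h : x ∈ l <;> simp [mapDom, ifMem, h]

lemma match_concat_single (L : List (RGX Sig × ℕ)) (hnd : (L.map Prod.snd).Nodup)
    (hm : ∀ p ∈ L, RMatch p.1 ([] : List Sig) 1 1 (minsert p.2 (1, 1) emptyMapping)) :
    RMatch (concatList (L.map Prod.fst)) ([] : List Sig) 1 1 (ifMem (L.map Prod.snd)) := by
  induction L with
  | nil =>
      have he : ifMem ([] : List ℕ) = emptyMapping := by
        funext v; simp [ifMem, emptyMapping]
      rw [List.map_nil, List.map_nil, he]
      exact RMatch.eps le_rfl (by simp)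
  | cons p L ih =>
      cases L with
      | nil =>
          have he : ifMem ([p.2]) = minsert p.2 (1, 1) emptyMapping := by
            funext v; by_cases h : v = p.2 <;> simp [ifMem, minsert, emptyMapping, h]
          simpa [concatList, he] using hm p (by simp)
      | cons q L' =>
          have hnd' : ((q :: L').map Prod.snd).Nodup := (List.nodup_cons.mp hnd).2
          have hnotin : p.2 ∉ (q :: L').map Prod.snd := (List.nodup_cons.mp hnd).1
          have h2 := ih hnd' (fun r hr => hm r (List.mem_cons_of_mem _ hr))
          have h1 := hm p (by simp)
          have hd : DisjointDom (minsert p.2 (1, 1) emptyMapping)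
              (ifMem ((q :: L').map Prod.snd)) := by
            intro x
            by_cases hx : x = p.2
            · subst hx
              exact Or.inr (by simp only [ifMem, if_neg hnotin])
            · exact Or.inl (by simp [minsert, emptyMapping, hx])
          have hmm := RMatch.concat h1 h2 hd
          have heq : munion (minsert p.2 (1, 1) emptyMapping) (ifMem ((q :: L').map Prod.snd))
              = ifMem ((p :: q :: L').map Prod.snd) := by
            funext v
            rw [show List.map Prod.snd (p :: q :: L') = p.2 :: List.map Prod.snd (q :: L')
                  from rfl, ifMem_cons]
            by_cases hv : v = p.2
            · simp [munion, minsert, hv]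
            · have h1 : minsert p.2 (1, 1) emptyMapping v = none := by
                simp [minsert, emptyMapping, hv]
              simp only [munion]
              rw [h1, if_neg hv]
          rw [heq] at hmm
          exact hmm

/-! ### The structure of `gammaN` -/

/-- The `i`-th factor of `gammaN`. -/
noncomputable def factorN (Sig : Type) [Fintype Sig] [DecidableEq Sig] (i : ℕ) : RGX Sig :=
  RGX.union (.bind (2 * i) (.star (allLetters Sig)))
            (.bind (2 * i + 1) (.star (allLetters Sig)))

lemma gammaN_eq (n : ℕ) :
    gammaN Sig n = concatList (List.ofFn fun i : Fin n => factorN Sig (i : ℕ)) := rfl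

lemma vars_disjList_letters (l : List Sig) : (disjList (l.map RGX.letter)).vars = ∅ := by
  induction l with
  | nil => simp [disjList, RGX.vars]
  | cons a l ih =>
      cases l with
      | nil => simp [disjList, RGX.vars]
      | cons b l' => simpa [disjList, RGX.vars] using ih

lemma seq_disjList_letters (l : List Sig) : (disjList (l.map RGX.letter)).Sequential := by
  induction l with
  | nil => simp [disjList, RGX.Sequential]
  | cons a l ih =>
      cases l with
      | nil => simp [disjList, RGX.Sequential]
      | cons b l' => exact ⟨trivial, ih⟩

lemma vars_allLetters : (allLetters Sig).vars = ∅ := vars_disjList_letters _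

lemma seq_allLetters : (allLetters Sig).Sequential := seq_disjList_letters _

lemma vars_factorN (i : ℕ) : (factorN Sig i).vars = {2 * i, 2 * i + 1} := by
  simp [factorN, RGX.vars, vars_allLetters]

lemma seq_factorN (i : ℕ) : (factorN Sig i).Sequential := by
  refine ⟨⟨⟨seq_allLetters, vars_allLetters⟩, ?_⟩, ⟨⟨seq_allLetters, vars_allLetters⟩, ?_⟩⟩ <;>
    simp [RGX.vars, vars_allLetters]

lemma vars_concatList_sub (L : List (RGX Sig)) :
    (concatList L).vars ⊆ L.foldr (fun a s => a.vars ∪ s) ∅ := by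
  induction L with
  | nil => simp [concatList, RGX.vars]
  | cons a L ih =>
      cases L with
      | nil => simp [concatList]
      | cons b L' =>
          simp only [concatList, RGX.vars, List.foldr_cons]
          exact Finset.union_subset_union (le_refl _) ih

lemma disjoint_foldr_vars (s : Finset ℕ) (L : List (RGX Sig))
    (h : ∀ c ∈ L, Disjoint s c.vars) :
    Disjoint s (L.foldr (fun a t => a.vars ∪ t) ∅) := by
  induction L with
  | nil => simp
  | cons a L ih =>
      simp only [List.foldr_cons, Finset.disjoint_union_right]
      exact ⟨h a (by simp), ih fun c hc => h c (List.mem_cons_of_mem _ hc)⟩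

lemma seq_concatList (L : List (RGX Sig)) (hs : ∀ α ∈ L, α.Sequential)
    (hd : L.Pairwise fun a b => Disjoint a.vars b.vars) : (concatList L).Sequential := by
  induction L with
  | nil => trivial
  | cons a L ih =>
      cases L with
      | nil => exact hs a (by simp)
      | cons b L' =>
          obtain ⟨hda, hd'⟩ := List.pairwise_cons.mp hd
          refine ⟨hs a (by simp), ih (fun c hc => hs c (List.mem_cons_of_mem _ hc)) hd', ?_⟩
          exact Finset.disjoint_of_subset_right (vars_concatList_sub _)
            (disjoint_foldr_vars _ _ fun c hc => hda c hc)

lemma seq_gammaN (n : ℕ) : (gammaN Sig n).Sequential := by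
  rw [gammaN_eq]
  refine seq_concatList _ ?_ ?_
  · intro α hα
    obtain ⟨i, rfl⟩ := List.mem_ofFn.mp hα
    exact seq_factorN _
  · rw [List.pairwise_ofFn]
    intro i j hij
    rw [vars_factorN, vars_factorN, Finset.disjoint_left]
    intro x hx hy
    simp only [Finset.mem_insert, Finset.mem_singleton] at hx hy
    have : (i : ℕ) < j := hij
    omega

/-- The variable chosen by `f` in the `i`-th factor. -/
def varOf {n : ℕ} (f : Fin n → Bool) (i : Fin n) : ℕ :=
  2 * (i : ℕ) + (if f i then 0 else 1)

lemma varOf_inj_iff {n : ℕ} (f g : Fin n → Bool) (i j : Fin n)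
    (h : varOf f i = varOf g j) : i = j ∧ f i = g j := by
  unfold varOf at h
  rcases hfi : f i <;> rcases hgj : g j <;> simp [hfi, hgj] at h <;>
    first
      | exact ⟨Fin.ext (by omega), rfl⟩
      | omega

lemma match_factorN {n : ℕ} (f : Fin n → Bool) (i : Fin n) :
    RMatch (factorN Sig (i : ℕ)) ([] : List Sig) 1 1
      (minsert (varOf f i) (1, 1) emptyMapping) := by
  have hstar : RMatch (RGX.star (allLetters Sig)) ([] : List Sig) 1 1 emptyMapping :=
    RMatch.starNil le_rfl (by simp)
  rcases hfi : f i with _ | _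
  · have : varOf f i = 2 * (i : ℕ) + 1 := by simp [varOf, hfi]
    rw [this]
    exact RMatch.unionR (RMatch.bind hstar rfl)
  · have : varOf f i = 2 * (i : ℕ) := by simp [varOf, hfi]
    rw [this]
    exact RMatch.unionL (RMatch.bind hstar rfl)

lemma match_gammaN {n : ℕ} (f : Fin n → Bool) :
    RMatch (gammaN Sig n) ([] : List Sig) 1 1 (ifMem (List.ofFn (varOf f))) := by
  have hL : (List.ofFn fun i : Fin n => ((factorN Sig (i : ℕ), varOf f i) : RGX Sig × ℕ)).map
      Prod.fst = List.ofFn fun i : Fin n => factorN Sig (i : ℕ) := by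
    rw [List.map_ofFn]; rfl
  have hS : (List.ofFn fun i : Fin n => ((factorN Sig (i : ℕ), varOf f i) : RGX Sig × ℕ)).map
      Prod.snd = List.ofFn (varOf f) := by
    rw [List.map_ofFn]; rfl
  have hnd : ((List.ofFn fun i : Fin n => ((factorN Sig (i : ℕ), varOf f i) : RGX Sig × ℕ)).map
      Prod.snd).Nodup := by
    rw [hS, List.nodup_ofFn]
    intro i j h
    exact (varOf_inj_iff f f i j h).1
  have hm := match_concat_single _ hnd (fun p hp => by
    obtain ⟨i, hi⟩ := List.mem_ofFn.mp hp
    rw [← hi]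
    exact match_factorN f i)
  rw [hL, hS] at hm
  rw [gammaN_eq]
  exact hm

theorem statement9 (n : ℕ) (hn : 1 ≤ n) :
    (gammaN Sig n).Sequential ∧
    ∀ β : RGX Sig, DisjFunctional β →
      (∀ d : List Sig, rgxSem β d = rgxSem (gammaN Sig n) d) →
      2 ^ n ≤ countDisjuncts β := by
  refine ⟨seq_gammaN n, ?_⟩
  intro β hβ hsem
  obtain ⟨D, hcard, hdom⟩ := disj_domains hβ
  have hmem : ∀ f : Fin n → Bool, (List.ofFn (varOf f)).toFinset ∈ D := by
    intro f
    have hμ : ifMem (List.ofFn (varOf f)) ∈ rgxSem β ([] : List Sig) := by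
      rw [hsem]
      show RMatch (gammaN Sig n) ([] : List Sig) 1 (List.length ([] : List Sig) + 1) _
      simpa using match_gammaN f
    obtain ⟨V, hV, hVd⟩ := hdom _ _ hμ
    rw [mapDom_ifMem] at hVd
    rwa [Finset.coe_injective hVd]
  have hinj : Function.Injective fun f : Fin n → Bool => (List.ofFn (varOf f)).toFinset := by
    intro f g hfg
    simp only at hfg
    funext i
    have hmemi : varOf f i ∈ (List.ofFn (varOf g)).toFinset := by
      rw [← hfg, List.mem_toFinset]
      exact List.mem_ofFn.mpr ⟨i, rfl⟩
    rw [List.mem_toFinset] at hmemi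
    obtain ⟨j, hj⟩ := List.mem_ofFn.mp hmemi
    obtain ⟨hij, hb⟩ := varOf_inj_iff g f j i hj
    exact hb.symm.trans (congrArg g hij)
  calc 2 ^ n = Fintype.card (Fin n → Bool) := by simp
    _ = (Finset.univ : Finset (Fin n → Bool)).card := Finset.card_univ.symm
    _ ≤ D.card := Finset.card_le_card_of_injOn _ (fun f _ => hmem f) (fun f _ g _ h => hinj h)
    _ ≤ countDisjuncts β := hcard

end Spanners
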